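/- arXiv:2506.20172 — 2 statements merged into one kernel-verified Lean document; each statement's English description precedes it below -/
import Mathlib

section
/- For n ≥ 2, the average QAP cost over all permutations satisfies E[Q_{A,B}(φ)] = (1/(n(n−1))) (Σ_{(i,j)∈M²} a_{ij}) (Σ_{(r,s)∈M²} b_{rs}) + (1/n) (Σ_{i∈N} a_{ii}) (Σ_{r∈N} b_{rr}), where the expectation is taken with φ uniformly distributed over S_n. -/
open Finset

/-- QAP cost function. -/
def qapCost {n : ℕ} (A B : Matrix (Fin n) (Fin n) ℝ) (φ : Equiv.Perm (Fin n)) : ℝ :=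
  ∑ i, ∑ j, A i j * B (φ i) (φ j)

section aux

variable {n : ℕ}

/-- Fibers of φ ↦ φ i all have the same cardinality. -/
lemma fiber_one_const (i r r' : Fin n) :
    (univ.filter (fun φ : Equiv.Perm (Fin n) => φ i = r)).card =
    (univ.filter (fun φ : Equiv.Perm (Fin n) => φ i = r')).card := by
  apply Finset.card_bij (fun φ _ => Equiv.swap r r' * φ)
  · intro φ hφ
    simp only [mem_filter, mem_univ, true_and] at hφ ⊢
    simp [hφ]
  · intro a ha b hb hab
    exact mul_left_cancel hab
  · intro ψ hψ
    refine ⟨Equiv.swap r r' * ψ, ?_, ?_⟩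
    · simp only [mem_filter, mem_univ, true_and] at hψ ⊢
      simp [hψ]
    · rw [← mul_assoc, Equiv.swap_mul_self, one_mul]

lemma fiber_one_card (hn : 1 ≤ n) (i r : Fin n) :
    (univ.filter (fun φ : Equiv.Perm (Fin n) => φ i = r)).card = (n - 1).factorial := by
  have key : ∑ r' : Fin n, (univ.filter (fun φ : Equiv.Perm (Fin n) => φ i = r')).card
      = (univ : Finset (Equiv.Perm (Fin n))).card := by
    rw [Finset.card_eq_sum_card_fiberwise (f := fun φ : Equiv.Perm (Fin n) => φ i)
      (fun x _ => mem_univ _)]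
  have hconst : ∀ r' : Fin n,
      (univ.filter (fun φ : Equiv.Perm (Fin n) => φ i = r')).card =
      (univ.filter (fun φ : Equiv.Perm (Fin n) => φ i = r)).card :=
    fun r' => fiber_one_const i r' r
  rw [Finset.sum_congr rfl (fun r' _ => hconst r'), Finset.sum_const, smul_eq_mul] at key
  simp only [Finset.card_univ, Fintype.card_perm, Fintype.card_fin] at key
  have hfact : n.factorial = n * (n - 1).factorial := by
    obtain ⟨m, rfl⟩ : ∃ m, n = m + 1 := ⟨n - 1, by omega⟩
    simp [Nat.factorial_succ]
  rw [hfact] at key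
  exact Nat.eq_of_mul_eq_mul_left hn key

/-- A permutation sending a pair of distinct points to another pair of distinct points. -/
lemma exists_perm_pair {r s r' s' : Fin n} (hrs : r ≠ s) (hrs' : r' ≠ s') :
    ∃ σ : Equiv.Perm (Fin n), σ r = r' ∧ σ s = s' := by
  set s₁ := Equiv.swap r r' s with hs₁
  refine ⟨Equiv.swap s₁ s' * Equiv.swap r r', ?_, ?_⟩
  · have h1 : Equiv.swap r r' r = r' := Equiv.swap_apply_left r r'
    have h2 : s₁ ≠ r' := by
      intro h
      apply hrs
      have := (Equiv.swap r r').injective (h.trans h1.symm)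
      exact this.symm ▸ rfl
    simp only [Equiv.Perm.mul_apply, h1]
    exact Equiv.swap_apply_of_ne_of_ne (Ne.symm h2) hrs'
  · simp only [Equiv.Perm.mul_apply, ← hs₁]
    exact Equiv.swap_apply_left s₁ s'

lemma fiber_two_const {i j : Fin n} (r s r' s' : Fin n) (hrs : r ≠ s) (hrs' : r' ≠ s') :
    (univ.filter (fun φ : Equiv.Perm (Fin n) => φ i = r ∧ φ j = s)).card =
    (univ.filter (fun φ : Equiv.Perm (Fin n) => φ i = r' ∧ φ j = s')).card := by
  obtain ⟨σ, hσr, hσs⟩ := exists_perm_pair hrs hrs'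
  apply Finset.card_bij (fun φ _ => σ * φ)
  · intro φ hφ
    simp only [mem_filter, mem_univ, true_and] at hφ ⊢
    simp [hφ.1, hφ.2, hσr, hσs]
  · intro a _ b _ hab
    exact mul_left_cancel hab
  · intro ψ hψ
    refine ⟨σ⁻¹ * ψ, ?_, ?_⟩
    · simp only [mem_filter, mem_univ, true_and] at hψ ⊢
      constructor
      · rw [Equiv.Perm.mul_apply, hψ.1, ← hσr, Equiv.Perm.inv_def, Equiv.symm_apply_apply]
      · rw [Equiv.Perm.mul_apply, hψ.2, ← hσs, Equiv.Perm.inv_def, Equiv.symm_apply_apply]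
    · rw [← mul_assoc, mul_inv_cancel, one_mul]

lemma fiber_two_card (hn : 2 ≤ n) {i j : Fin n} (hij : i ≠ j) {r s : Fin n} (hrs : r ≠ s) :
    (univ.filter (fun φ : Equiv.Perm (Fin n) => φ i = r ∧ φ j = s)).card
      = (n - 2).factorial := by
  classical
  have key : ∑ p ∈ (univ : Finset (Fin n)).offDiag,
      (univ.filter (fun φ : Equiv.Perm (Fin n) => φ i = p.1 ∧ φ j = p.2)).card
      = (univ : Finset (Equiv.Perm (Fin n))).card := by
    rw [Finset.card_eq_sum_card_fiberwise
      (f := fun φ : Equiv.Perm (Fin n) => ((φ i, φ j) : Fin n × Fin n))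
      (t := (univ : Finset (Fin n)).offDiag)]
    · apply Finset.sum_congr rfl
      intro p _
      congr 1
      apply Finset.filter_congr
      intro φ _
      simp [Prod.ext_iff]
    · intro φ _
      simp only [Finset.mem_coe, Finset.mem_offDiag, mem_univ, true_and]
      exact fun h => hij (φ.injective h)
  have hconst : ∀ p ∈ (univ : Finset (Fin n)).offDiag,
      (univ.filter (fun φ : Equiv.Perm (Fin n) => φ i = p.1 ∧ φ j = p.2)).card =
      (univ.filter (fun φ : Equiv.Perm (Fin n) => φ i = r ∧ φ j = s)).card := by
    intro p hp
    rw [Finset.mem_offDiag] at hp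
    exact fiber_two_const p.1 p.2 r s hp.2.2 hrs
  rw [Finset.sum_congr rfl hconst, Finset.sum_const, smul_eq_mul] at key
  have hcard : ((univ : Finset (Fin n)).offDiag).card = n * (n - 1) := by
    rw [Finset.offDiag_card]
    simp [Nat.mul_sub_one, Finset.card_univ]
  rw [hcard] at key
  simp only [Finset.card_univ, Fintype.card_perm, Fintype.card_fin] at key
  have hfact : n.factorial = n * (n - 1) * (n - 2).factorial := by
    obtain ⟨m, rfl⟩ : ∃ m, n = m + 2 := ⟨n - 2, by omega⟩
    simp [Nat.factorial_succ]
    ring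
  rw [hfact] at key
  have hpos : 0 < n * (n - 1) := by
    have : 1 ≤ n - 1 := by omega
    exact Nat.mul_pos (by omega) this
  exact Nat.eq_of_mul_eq_mul_left hpos key

lemma sum_perm_diag (hn : 1 ≤ n) (i : Fin n) (g : Fin n → ℝ) :
    ∑ φ : Equiv.Perm (Fin n), g (φ i) = ((n - 1).factorial : ℝ) * ∑ r, g r := by
  classical
  rw [← Finset.sum_fiberwise_of_maps_to (g := fun φ : Equiv.Perm (Fin n) => φ i)
    (fun φ _ => mem_univ (φ i))]
  rw [Finset.mul_sum]
  apply Finset.sum_congr rfl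
  intro r _
  have hcg : ∑ φ ∈ univ.filter (fun φ : Equiv.Perm (Fin n) => φ i = r), g (φ i)
      = ∑ _φ ∈ univ.filter (fun φ : Equiv.Perm (Fin n) => φ i = r), g r :=
    Finset.sum_congr rfl (fun φ hφ => by rw [(Finset.mem_filter.mp hφ).2])
  rw [hcg, Finset.sum_const, fiber_one_card hn i r, nsmul_eq_mul]

lemma sum_perm_offdiag (hn : 2 ≤ n) {i j : Fin n} (hij : i ≠ j) (g : Fin n → Fin n → ℝ) :
    ∑ φ : Equiv.Perm (Fin n), g (φ i) (φ j)
      = ((n - 2).factorial : ℝ) * ∑ p ∈ (univ : Finset (Fin n)).offDiag, g p.1 p.2 := by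
  classical
  rw [← Finset.sum_fiberwise_of_maps_to
    (g := fun φ : Equiv.Perm (Fin n) => ((φ i, φ j) : Fin n × Fin n))
    (t := (univ : Finset (Fin n)).offDiag)
    (fun φ _ => by
      simp only [Finset.mem_offDiag, mem_univ, true_and]
      exact fun h => hij (φ.injective h))]
  rw [Finset.mul_sum]
  apply Finset.sum_congr rfl
  intro p hp
  rw [Finset.mem_offDiag] at hp
  have : (univ.filter (fun φ : Equiv.Perm (Fin n) => (φ i, φ j) = p))
      = (univ.filter (fun φ : Equiv.Perm (Fin n) => φ i = p.1 ∧ φ j = p.2)) := by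
    apply Finset.filter_congr
    intro φ _
    simp [Prod.ext_iff]
  have hcg : ∑ φ ∈ univ.filter (fun φ : Equiv.Perm (Fin n) => (φ i, φ j) = p), g (φ i) (φ j)
      = ∑ _φ ∈ univ.filter (fun φ : Equiv.Perm (Fin n) => (φ i, φ j) = p), g p.1 p.2 := by
    apply Finset.sum_congr rfl
    intro φ hφ
    rw [← (Finset.mem_filter.mp hφ).2]
  rw [hcg, Finset.sum_const, this, fiber_two_card hn hij hp.2.2, nsmul_eq_mul]

end aux

theorem stmt_13 (n : ℕ) (hn : 2 ≤ n) (A B : Matrix (Fin n) (Fin n) ℝ) :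
    (1 / (Nat.factorial n : ℝ)) * ∑ φ : Equiv.Perm (Fin n), qapCost A B φ =
      (1 / ((n : ℝ) * ((n : ℝ) - 1))) *
          (∑ p ∈ Finset.univ.offDiag, A p.1 p.2) *
          (∑ p ∈ Finset.univ.offDiag, B p.1 p.2)
        + (1 / (n : ℝ)) * (∑ i, A i i) * (∑ r, B r r) := by
  classical
  have key : ∑ φ : Equiv.Perm (Fin n), qapCost A B φ
      = ((n - 2).factorial : ℝ) * (∑ p ∈ (univ : Finset (Fin n)).offDiag, A p.1 p.2)
          * (∑ p ∈ (univ : Finset (Fin n)).offDiag, B p.1 p.2)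
        + ((n - 1).factorial : ℝ) * (∑ i, A i i) * (∑ r, B r r) := by
    simp only [qapCost]
    rw [Finset.sum_comm]
    have hsplit : ∀ i : Fin n, ∑ φ : Equiv.Perm (Fin n), ∑ j, A i j * B (φ i) (φ j)
        = ∑ j, ∑ φ : Equiv.Perm (Fin n), A i j * B (φ i) (φ j) := fun i => Finset.sum_comm
    -- rewrite double sum over i,j as sum over pairs
    have main : ∑ i, ∑ j, ∑ φ : Equiv.Perm (Fin n), A i j * B (φ i) (φ j)
        = ∑ p ∈ (univ : Finset (Fin n)) ×ˢ (univ : Finset (Fin n)),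
            ∑ φ : Equiv.Perm (Fin n), A p.1 p.2 * B (φ p.1) (φ p.2) := by
      rw [Finset.sum_product]
    calc ∑ i, ∑ φ : Equiv.Perm (Fin n), ∑ j, A i j * B (φ i) (φ j)
        = ∑ i, ∑ j, ∑ φ : Equiv.Perm (Fin n), A i j * B (φ i) (φ j) := by
          exact Finset.sum_congr rfl (fun i _ => hsplit i)
      _ = ∑ p ∈ (univ : Finset (Fin n)) ×ˢ (univ : Finset (Fin n)),
            ∑ φ : Equiv.Perm (Fin n), A p.1 p.2 * B (φ p.1) (φ p.2) := main
      _ = _ := by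
          rw [← Finset.diag_union_offDiag (univ : Finset (Fin n)),
            Finset.sum_union (Finset.disjoint_diag_offDiag _), add_comm]
          congr 1
          · have hcg : ∀ p ∈ (univ : Finset (Fin n)).offDiag,
                (∑ φ : Equiv.Perm (Fin n), A p.1 p.2 * B (φ p.1) (φ p.2))
                  = A p.1 p.2 * (((n - 2).factorial : ℝ)
                      * ∑ q ∈ (univ : Finset (Fin n)).offDiag, B q.1 q.2) := by
              intro p hp
              rw [← Finset.mul_sum,
                sum_perm_offdiag hn (Finset.mem_offDiag.mp hp).2.2 (fun r s => B r s)]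
            rw [Finset.sum_congr rfl hcg, ← Finset.sum_mul]
            ring
          · rw [Finset.sum_diag]
            show ∑ i : Fin n, ∑ φ : Equiv.Perm (Fin n), A i i * B (φ i) (φ i) = _
            have hcg : ∀ i ∈ (univ : Finset (Fin n)),
                (∑ φ : Equiv.Perm (Fin n), A i i * B (φ i) (φ i))
                  = A i i * (((n - 1).factorial : ℝ) * ∑ r, B r r) := by
              intro i _
              rw [← Finset.mul_sum, sum_perm_diag (by omega) i (fun r => B r r)]
            rw [Finset.sum_congr rfl hcg, ← Finset.sum_mul]
            ring
  rw [key]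
  have h1 : (n.factorial : ℝ) = (n : ℝ) * ((n : ℝ) - 1) * ((n - 2).factorial : ℝ) := by
    obtain ⟨m, rfl⟩ : ∃ m, n = m + 2 := ⟨n - 2, by omega⟩
    push_cast [Nat.factorial_succ]
    ring
  have h2 : (n.factorial : ℝ) = (n : ℝ) * ((n - 1).factorial : ℝ) := by
    obtain ⟨m, rfl⟩ : ∃ m, n = m + 2 := ⟨n - 2, by omega⟩
    push_cast [Nat.factorial_succ]
    ring
  have hn0 : (n : ℝ) ≠ 0 := by positivity
  have hn1 : (n : ℝ) - 1 ≠ 0 := by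
    have : (2 : ℝ) ≤ (n : ℝ) := by exact_mod_cast hn
    linarith
  have h3 : ((n - 1).factorial : ℝ) = ((n : ℝ) - 1) * ((n - 2).factorial : ℝ) := by
    obtain ⟨m, rfl⟩ : ∃ m, n = m + 2 := ⟨n - 2, by omega⟩
    push_cast [Nat.factorial_succ]
    ring
  have hF2 : ((n - 2).factorial : ℝ) ≠ 0 := by positivity
  rw [h1, h3]
  field_simp
end

section
/- Let n ≥ 3, and fix x, y ∈ N. The conditional expected QAP cost over permutations fixing φ(x) = y satisfies: E[Q_{A,B}(φ) | φ(x)=y] = (1/((n−1)(n−2))) (Σ_{(i,j)∈M_x²} a_{ij})(Σ_{(r,s)∈M_y²} b_{rs}) + (1/(n−1)) (Σ_{i∈N_x} a_{ii})(Σ_{r∈N_y} b_{rr}) + (1/(n−1)) (Σ_{i∈N_x} a_{ix})(Σ_{r∈N_y} b_{ry}) + (1/(n−1)) (Σ_{j∈N_x} a_{xj})(Σ_{s∈N_y} b_{ys}) + a_{xx} b_{yy}, where the expectation is uniform over the (n−1)! permutations with φ(x) = y. -/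
open Finset Equiv
lemma card_fixing (s : Finset (Fin n)) :
    (univ.filter fun φ : Equiv.Perm (Fin n) => ∀ a ∈ s, φ a = a).card = (n - s.card).factorial := by
  rw [← Fintype.card_subtype]
  have e1 : {φ : Equiv.Perm (Fin n) // ∀ a ∈ s, φ a = a} ≃
      {φ : Equiv.Perm (Fin n) // ∀ a, ¬(a ∉ s) → φ a = a} :=
    Equiv.subtypeEquivRight (fun φ => by simp)
  have e2 := (Equiv.Perm.subtypeEquivSubtypePerm (fun a : Fin n => a ∉ s)).symm
  rw [Fintype.card_congr (e1.trans e2)]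
  rw [Fintype.card_perm, Fintype.card_subtype_compl, Fintype.card_coe, Fintype.card_fin]

lemma card_prescribe (τ : Equiv.Perm (Fin n)) (s : Finset (Fin n)) :
    (univ.filter fun φ : Equiv.Perm (Fin n) => ∀ a ∈ s, φ a = τ a).card
      = (n - s.card).factorial := by
  rw [← card_fixing s]
  apply Finset.card_bij' (fun φ _ => τ⁻¹ * φ) (fun ψ _ => τ * ψ)
  · intro φ hφ
    simp only [mem_filter, mem_univ, true_and] at hφ ⊢
    intro a ha
    simp [Equiv.Perm.mul_apply, hφ a ha]
  · intro ψ hψ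
    simp only [mem_filter, mem_univ, true_and] at hψ ⊢
    intro a ha
    simp [Equiv.Perm.mul_apply, hψ a ha]
  · intro φ _; group
  · intro ψ _; group
lemma exists_two {x i y r : Fin n} (hix : i ≠ x) (hry : r ≠ y) :
    ∃ τ : Equiv.Perm (Fin n), τ x = y ∧ τ i = r := by
  refine ⟨Equiv.swap (Equiv.swap x y i) r * Equiv.swap x y, ?_, ?_⟩
  · simp only [Equiv.Perm.mul_apply, Equiv.swap_apply_left]
    apply Equiv.swap_apply_of_ne_of_ne
    · intro h
      have h2 : Equiv.swap x y x = Equiv.swap x y i := by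
        rw [Equiv.swap_apply_left]; exact h
      exact hix ((Equiv.swap x y).injective h2).symm
    · exact hry.symm
  · simp only [Equiv.Perm.mul_apply, Equiv.swap_apply_left]

lemma exists_three {x i j y r s : Fin n} (hix : i ≠ x) (hjx : j ≠ x) (hij : i ≠ j)
    (hry : r ≠ y) (hsy : s ≠ y) (hrs : r ≠ s) :
    ∃ τ : Equiv.Perm (Fin n), τ x = y ∧ τ i = r ∧ τ j = s := by
  obtain ⟨τ0, h1, h2⟩ := exists_two hix hry
  refine ⟨Equiv.swap (τ0 j) s * τ0, ?_, ?_, ?_⟩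
  · simp only [Equiv.Perm.mul_apply, h1]
    apply Equiv.swap_apply_of_ne_of_ne
    · intro h; exact hjx (τ0.injective (h.symm.trans h1.symm))
    · exact hsy.symm
  · simp only [Equiv.Perm.mul_apply, h2]
    apply Equiv.swap_apply_of_ne_of_ne
    · intro h; exact hij (τ0.injective (h2.trans h))
    · exact hrs
  · simp only [Equiv.Perm.mul_apply, Equiv.swap_apply_left]
lemma card_one (x y : Fin n) :
    (univ.filter fun φ : Equiv.Perm (Fin n) => φ x = y).card = (n - 1).factorial := by
  have h := card_prescribe (Equiv.swap x y) {x}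
  simp only [Finset.card_singleton] at h
  rw [← h]
  congr 1
  apply Finset.filter_congr
  intro φ _
  simp [Equiv.swap_apply_left]

lemma card_two {x i y r : Fin n} (hix : i ≠ x) (hry : r ≠ y) :
    (univ.filter fun φ : Equiv.Perm (Fin n) => φ x = y ∧ φ i = r).card
      = (n - 2).factorial := by
  obtain ⟨τ, h1, h2⟩ := exists_two hix hry
  have h := card_prescribe τ {x, i}
  rw [Finset.card_insert_of_notMem (by simp [hix.symm]), Finset.card_singleton] at h
  rw [← h]
  congr 1
  apply Finset.filter_congr
  intro φ _
  simp [h1, h2, forall_eq_or_imp]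

lemma card_three {x i j y r s : Fin n} (hix : i ≠ x) (hjx : j ≠ x) (hij : i ≠ j)
    (hry : r ≠ y) (hsy : s ≠ y) (hrs : r ≠ s) :
    (univ.filter fun φ : Equiv.Perm (Fin n) => φ x = y ∧ φ i = r ∧ φ j = s).card
      = (n - 3).factorial := by
  obtain ⟨τ, h1, h2, h3⟩ := exists_three hix hjx hij hry hsy hrs
  have h := card_prescribe τ {x, i, j}
  rw [Finset.card_insert_of_notMem (by simp [hix.symm, hjx.symm]),
    Finset.card_insert_of_notMem (by simp [hij]), Finset.card_singleton] at h
  rw [← h]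
  congr 1
  apply Finset.filter_congr
  intro φ _
  simp [h1, h2, h3, forall_eq_or_imp]
lemma sum_single {x y i : Fin n} (hix : i ≠ x) (f : Fin n → ℝ) :
    ∑ φ ∈ univ.filter (fun φ : Equiv.Perm (Fin n) => φ x = y), f (φ i)
      = (n - 2).factorial * ∑ r ∈ univ.erase y, f r := by
  rw [← Finset.sum_fiberwise_of_maps_to' (g := fun φ : Equiv.Perm (Fin n) => φ i)
    (t := (univ : Finset (Fin n))) (fun _ _ => mem_univ _) f]
  rw [← Finset.sum_erase_add _ _ (mem_univ y)]
  have hy : ∑ φ ∈ (univ.filter fun φ : Equiv.Perm (Fin n) => φ x = y).filter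
      (fun φ => φ i = y), f y = 0 := by
    rw [Finset.filter_filter, Finset.filter_false_of_mem, Finset.sum_empty]
    intro φ _
    rintro ⟨h1, h2⟩
    exact hix (φ.injective (h2.trans h1.symm))
  rw [hy, add_zero, Finset.mul_sum]
  refine Finset.sum_congr rfl fun r hr => ?_
  rw [Finset.sum_const, Finset.filter_filter, card_two hix (Finset.ne_of_mem_erase hr),
    nsmul_eq_mul]

lemma sum_pair {x y i j : Fin n} (hix : i ≠ x) (hjx : j ≠ x) (hij : i ≠ j)
    (g : Fin n → Fin n → ℝ) :
    ∑ φ ∈ univ.filter (fun φ : Equiv.Perm (Fin n) => φ x = y), g (φ i) (φ j)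
      = (n - 3).factorial * ∑ p ∈ (univ.erase y).offDiag, g p.1 p.2 := by
  rw [← Finset.sum_fiberwise_of_maps_to' (g := fun φ : Equiv.Perm (Fin n) => (φ i, φ j))
    (t := (univ : Finset (Fin n × Fin n))) (fun _ _ => mem_univ _) (fun p => g p.1 p.2)]
  rw [Finset.mul_sum,
    ← Finset.sum_subset (Finset.subset_univ ((univ.erase y).offDiag)) ?_]
  · refine Finset.sum_congr rfl fun p hp => ?_
    rw [Finset.mem_offDiag] at hp
    obtain ⟨h1, h2, h3⟩ := hp
    rw [Finset.sum_const, Finset.filter_filter, nsmul_eq_mul]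
    congr 1
    have he : (univ.filter fun φ : Equiv.Perm (Fin n) => φ x = y ∧ (φ i, φ j) = p)
        = univ.filter fun φ => φ x = y ∧ φ i = p.1 ∧ φ j = p.2 := by
      apply Finset.filter_congr
      intro φ _
      simp [Prod.ext_iff, and_assoc]
    rw [he, card_three hix hjx hij (Finset.ne_of_mem_erase h1)
      (Finset.ne_of_mem_erase h2) h3]
  · intro p _ hp
    rw [Finset.filter_filter, Finset.filter_false_of_mem, Finset.sum_empty]
    intro φ _
    rintro ⟨h1, h2⟩
    apply hp
    rw [Finset.mem_offDiag]
    rw [Prod.ext_iff] at h2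
    obtain ⟨h2, h3⟩ := h2
    refine ⟨?_, ?_, ?_⟩
    · rw [Finset.mem_erase]
      exact ⟨fun h => hix (φ.injective ((h2.trans h).trans h1.symm)), mem_univ _⟩
    · rw [Finset.mem_erase]
      exact ⟨fun h => hjx (φ.injective ((h3.trans h).trans h1.symm)), mem_univ _⟩
    · intro h
      exact hij (φ.injective ((h2.trans h).trans h3.symm))

lemma sum_offDiag' {M : Type*} [AddCommMonoid M] (s : Finset (Fin n)) (f : Fin n → Fin n → M) :
    ∑ p ∈ s.offDiag, f p.1 p.2 = ∑ i ∈ s, ∑ j ∈ s.erase i, f i j := by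
  rw [show s.offDiag = (s ×ˢ s).filter (fun a => a.1 ≠ a.2) from by
    ext p; simp [Finset.mem_offDiag, and_assoc], Finset.sum_filter, Finset.sum_product]
  refine Finset.sum_congr rfl fun i hi => ?_
  rw [← Finset.sum_filter]
  congr 1
  ext j
  simp [Finset.mem_erase, ne_comm, and_comm]

lemma split_sum (x : Fin n) (F : Fin n → Fin n → ℝ) :
    ∑ i, ∑ j, F i j
      = (∑ i ∈ univ.erase x, ∑ j ∈ (univ.erase x).erase i, F i j)
        + (∑ i ∈ univ.erase x, F i i) + (∑ i ∈ univ.erase x, F i x)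
        + (∑ j ∈ univ.erase x, F x j) + F x x := by
  rw [← Finset.sum_erase_add _ _ (mem_univ x)]
  have h1 : ∑ j, F x j = ∑ j ∈ univ.erase x, F x j + F x x :=
    (Finset.sum_erase_add _ _ (mem_univ x)).symm
  have h2 : ∀ i ∈ univ.erase x, (∑ j, F i j)
      = ((∑ j ∈ (univ.erase x).erase i, F i j) + F i i) + F i x := by
    intro i hi
    rw [← Finset.sum_erase_add _ _ (mem_univ x)]
    congr 1
    exact (Finset.sum_erase_add _ _ hi).symm
  rw [Finset.sum_congr rfl h2, h1, Finset.sum_add_distrib, Finset.sum_add_distrib]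
  ring

theorem stmt_16 (n : ℕ) (hn : 3 ≤ n) (x y : Fin n)
    (A B : Matrix (Fin n) (Fin n) ℝ) :
    (1 / (Nat.factorial (n - 1) : ℝ)) *
        ∑ φ ∈ Finset.univ.filter (fun φ : Equiv.Perm (Fin n) => φ x = y),
          qapCost A B φ =
      (1 / (((n : ℝ) - 1) * ((n : ℝ) - 2))) *
          (∑ p ∈ (Finset.univ.erase x).offDiag, A p.1 p.2) *
          (∑ p ∈ (Finset.univ.erase y).offDiag, B p.1 p.2)
        + (1 / ((n : ℝ) - 1)) *
            (∑ i ∈ Finset.univ.erase x, A i i) * (∑ r ∈ Finset.univ.erase y, B r r)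
        + (1 / ((n : ℝ) - 1)) *
            (∑ i ∈ Finset.univ.erase x, A i x) * (∑ r ∈ Finset.univ.erase y, B r y)
        + (1 / ((n : ℝ) - 1)) *
            (∑ j ∈ Finset.univ.erase x, A x j) * (∑ s ∈ Finset.univ.erase y, B y s)
        + A x x * B y y := by
  set S := Finset.univ.filter (fun φ : Equiv.Perm (Fin n) => φ x = y) with hS
  have hmem : ∀ φ ∈ S, φ x = y := fun φ hφ => (Finset.mem_filter.mp hφ).2
  have c00 : ∑ φ ∈ S, B (φ x) (φ x) = ((n-1).factorial : ℝ) * B y y := by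
    rw [Finset.sum_congr rfl (fun φ hφ => by rw [hmem φ hφ]), Finset.sum_const,
      hS, card_one, nsmul_eq_mul]
  have c0j : ∀ j : Fin n, j ≠ x → ∑ φ ∈ S, B (φ x) (φ j)
      = ((n-2).factorial : ℝ) * ∑ s ∈ univ.erase y, B y s := by
    intro j hj
    rw [Finset.sum_congr rfl (fun φ hφ => by rw [hmem φ hφ])]
    exact sum_single hj _
  have ci0 : ∀ i : Fin n, i ≠ x → ∑ φ ∈ S, B (φ i) (φ x)
      = ((n-2).factorial : ℝ) * ∑ r ∈ univ.erase y, B r y := by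
    intro i hi
    rw [Finset.sum_congr rfl (fun φ hφ => by rw [hmem φ hφ])]
    exact sum_single hi (fun r => B r y)
  have cii : ∀ i : Fin n, i ≠ x → ∑ φ ∈ S, B (φ i) (φ i)
      = ((n-2).factorial : ℝ) * ∑ r ∈ univ.erase y, B r r :=
    fun i hi => sum_single hi (fun r => B r r)
  have cij : ∀ i j : Fin n, i ≠ x → j ≠ x → i ≠ j → ∑ φ ∈ S, B (φ i) (φ j)
      = ((n-3).factorial : ℝ) * ∑ p ∈ (univ.erase y).offDiag, B p.1 p.2 :=
    fun i j hi hj hij => sum_pair hi hj hij _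
  have key : ∑ φ ∈ S, qapCost A B φ
      = (∑ p ∈ (univ.erase x).offDiag, A p.1 p.2) *
          (((n-3).factorial : ℝ) * ∑ p ∈ (univ.erase y).offDiag, B p.1 p.2)
        + (∑ i ∈ univ.erase x, A i i) * (((n-2).factorial : ℝ) * ∑ r ∈ univ.erase y, B r r)
        + (∑ i ∈ univ.erase x, A i x) * (((n-2).factorial : ℝ) * ∑ r ∈ univ.erase y, B r y)
        + (∑ j ∈ univ.erase x, A x j) * (((n-2).factorial : ℝ) * ∑ s ∈ univ.erase y, B y s)
        + A x x * (((n-1).factorial : ℝ) * B y y) := by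
    unfold qapCost
    rw [Finset.sum_comm]
    rw [Finset.sum_congr rfl (fun i (_ : i ∈ (univ : Finset (Fin n))) => Finset.sum_comm)]
    have hpull : ∀ i j : Fin n, ∑ φ ∈ S, A i j * B (φ i) (φ j)
        = A i j * ∑ φ ∈ S, B (φ i) (φ j) := fun i j => (Finset.mul_sum _ _ _).symm
    rw [Finset.sum_congr rfl (fun i _ => Finset.sum_congr rfl (fun j _ => hpull i j))]
    rw [split_sum x (fun i j => A i j * ∑ φ ∈ S, B (φ i) (φ j))]
    congr 1
    congr 1
    congr 1
    congr 1
    · -- off-diagonal block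
      rw [Finset.sum_congr rfl (fun i hi => Finset.sum_congr rfl
        (fun j hj => by rw [cij i j (Finset.ne_of_mem_erase hi)
          (Finset.ne_of_mem_erase (Finset.mem_of_mem_erase hj))
          (Finset.ne_of_mem_erase hj).symm]))]
      rw [Finset.sum_congr rfl (fun i _ => (Finset.sum_mul ((univ.erase x).erase i) (fun j => A i j) _).symm),
        ← Finset.sum_mul, ← sum_offDiag' (univ.erase x) (fun i j => A i j)]
    · rw [Finset.sum_congr rfl (fun i hi => by
        rw [cii i (Finset.ne_of_mem_erase hi)]), ← Finset.sum_mul]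
    · rw [Finset.sum_congr rfl (fun i hi => by
        rw [ci0 i (Finset.ne_of_mem_erase hi)]), ← Finset.sum_mul]
    · rw [Finset.sum_congr rfl (fun j hj => by
        rw [c0j j (Finset.ne_of_mem_erase hj)]), ← Finset.sum_mul]
    · rw [c00]
  rw [key]
  have h2n : 2 ≤ n := by omega
  have h3n : 3 ≤ n := hn
  have e1 : ((n-1).factorial : ℝ) = ((n:ℝ) - 1) * ((n-2).factorial : ℝ) := by
    have h : n - 1 = (n - 2) + 1 := by omega
    rw [h, Nat.factorial_succ, Nat.cast_mul, Nat.cast_add, Nat.cast_one,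
      Nat.cast_sub h2n]
    ring
  have e2 : ((n-2).factorial : ℝ) = ((n:ℝ) - 2) * ((n-3).factorial : ℝ) := by
    have h : n - 2 = (n - 3) + 1 := by omega
    rw [h, Nat.factorial_succ, Nat.cast_mul, Nat.cast_add, Nat.cast_one,
      Nat.cast_sub h3n]
    ring
  have ha : (n:ℝ) - 1 ≠ 0 := by
    have : (3:ℝ) ≤ (n:ℝ) := by exact_mod_cast h3n
    linarith
  have hb : (n:ℝ) - 2 ≠ 0 := by
    have : (3:ℝ) ≤ (n:ℝ) := by exact_mod_cast h3n
    linarith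
  have hf : ((n-3).factorial : ℝ) ≠ 0 := by
    exact_mod_cast (Nat.factorial_pos (n-3)).ne'
  rw [e1, e2]
  field_simp
end
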